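/- Let B be a finite family of bonds, Φ(X) bounded operators for X∈B, and define ξ(B) via the Möbius transform of e^{-βH_{B'}}. Define for s ∈ [0,1]^B the function G(s) = e^{-β Σ_{X∈B} s_X Φ(X)}. Then ξ(B) = Π_{X∈B} [∫_0^1 ds_X ∂/∂s_X] G(s), i.e., the iterated integral of the full mixed partial derivative of G over the unit cube [0,1]^B. -/

import Mathlib

open NormedSpace

/-- The iterated operator `Π_{x ∈ l} [∫_0^1 ds_x ∂/∂s_x]` acting on functions of
finitely many real decoupling parameters. -/
noncomputable def intPartial {ι : Type*} [Fintype ι] [DecidableEq ι]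
    {A : Type*} [NormedAddCommGroup A] [NormedSpace ℝ A] :
    List ι → ((ι → ℝ) → A) → ((ι → ℝ) → A)
  | [], f => f
  | x :: xs, f => fun s =>
      ∫ t in (0:ℝ)..1,
        fderiv ℝ (intPartial xs f) (Function.update s x t) (Pi.single x 1)

section Aux
variable {ι : Type*} [Fintype ι] [DecidableEq ι]
variable {A : Type*} [NormedAddCommGroup A] [NormedSpace ℝ A] [CompleteSpace A]

/-- environment: 1 on S, 0 on l, ambient s elsewhere -/
def updEnv (l : List ι) (S : Finset ι) (s : ι → ℝ) : ι → ℝ :=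
  fun y => if y ∈ S then 1 else if y ∈ l then 0 else s y

lemma contDiff_updEnv (l : List ι) (S : Finset ι) :
    ContDiff ℝ ⊤ (fun s : ι → ℝ => updEnv l S s) := by
  apply contDiff_pi.2
  intro y
  unfold updEnv
  by_cases h1 : y ∈ S
  · simp only [h1, if_true]; exact contDiff_const
  · by_cases h2 : y ∈ l
    · simp only [h1, h2, if_false, if_true]; exact contDiff_const
    · simp only [h1, h2, if_false]
      exact (ContinuousLinearMap.proj (R := ℝ) (φ := fun _ : ι => ℝ) y).contDiff

lemma ftc_step (F : (ι → ℝ) → A) (hF : ContDiff ℝ ⊤ F) (s : ι → ℝ) (x : ι) :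
    ∫ t in (0:ℝ)..1, fderiv ℝ F (Function.update s x t) (Pi.single x 1)
      = F (Function.update s x 1) - F (Function.update s x 0) := by
  have hd : ∀ t : ℝ, HasDerivAt (fun t => F (Function.update s x t))
      (fderiv ℝ F (Function.update s x t) (Pi.single x 1)) t := fun t =>
    ((hF.differentiable (by simp) (Function.update s x t)).hasFDerivAt).comp_hasDerivAt t
      (hasDerivAt_update s x t)
  have h1 : Continuous fun t : ℝ => Function.update s x t :=
    (continuous_update x).comp (Continuous.prodMk_right s)
  have hcont : Continuous fun t : ℝ =>
      fderiv ℝ F (Function.update s x t) (Pi.single x 1) :=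
    ((ContinuousLinearMap.apply ℝ A (Pi.single x 1 : ι → ℝ)).continuous).comp
      ((hF.continuous_fderiv (by simp)).comp h1)
  exact intervalIntegral.integral_eq_sub_of_hasDerivAt (fun t _ => hd t)
    (hcont.intervalIntegrable 0 1)

lemma intPartial_eq (f : (ι → ℝ) → A) (hf : ContDiff ℝ ⊤ f) :
    ∀ (l : List ι), l.Nodup → ∀ s : ι → ℝ,
      intPartial l f s = ∑ S ∈ l.toFinset.powerset,
        ((-1 : ℤ) ^ (l.length - S.card)) • f (updEnv l S s) := by
  intro l
  induction l with
  | nil =>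
    intro _ s
    simp only [intPartial, List.toFinset_nil, Finset.powerset_empty,
      Finset.sum_singleton, List.length_nil, Finset.card_empty, Nat.sub_self,
      pow_zero, one_smul]
    rfl
  | cons x xs ih =>
    intro hnd s
    have hx : x ∉ xs := (List.nodup_cons.1 hnd).1
    have hnd' : xs.Nodup := (List.nodup_cons.1 hnd).2
    set F : (ι → ℝ) → A := fun u => ∑ S ∈ xs.toFinset.powerset,
      ((-1 : ℤ) ^ (xs.length - S.card)) • f (updEnv xs S u) with hFdef
    have hFeq : intPartial xs f = F := funext (ih hnd')
    have hF : ContDiff ℝ ⊤ F := by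
      apply ContDiff.sum
      intro S _
      exact ((hf.comp (contDiff_updEnv xs S))).const_smul _
    have hstep : intPartial (x :: xs) f s
        = F (Function.update s x 1) - F (Function.update s x 0) := by
      show (∫ t in (0:ℝ)..1,
          fderiv ℝ (intPartial xs f) (Function.update s x t) (Pi.single x 1)) = _
      rw [hFeq]
      exact ftc_step F hF s x
    rw [hstep]
    have hxts : x ∉ xs.toFinset := by simpa using hx
    have hcard : ∀ S ∈ xs.toFinset.powerset, S.card ≤ xs.length := by
      intro S hS
      have h := Finset.card_le_card (Finset.mem_powerset.1 hS)
      rwa [List.toFinset_card_of_nodup hnd'] at h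
    have hupd1 : ∀ S ∈ xs.toFinset.powerset,
        updEnv xs S (Function.update s x 1) = updEnv (x :: xs) (insert x S) s := by
      intro S hS
      have hxS : x ∉ S := fun h => hxts (Finset.mem_powerset.1 hS h)
      funext y
      by_cases hy : y = x
      · subst hy
        simp [updEnv, hxS, hx]
      · simp [updEnv, Function.update_of_ne hy, Finset.mem_insert, hy]
    have hupd0 : ∀ S ∈ xs.toFinset.powerset,
        updEnv xs S (Function.update s x 0) = updEnv (x :: xs) S s := by
      intro S hS
      have hxS : x ∉ S := fun h => hxts (Finset.mem_powerset.1 hS h)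
      funext y
      by_cases hy : y = x
      · subst hy
        simp [updEnv, hxS]
      · simp [updEnv, Function.update_of_ne hy, hy]
    have htf : (x :: xs).toFinset = insert x xs.toFinset := by simp
    rw [htf, Finset.sum_powerset_insert hxts]
    have e0 : ∑ S ∈ xs.toFinset.powerset,
        ((-1 : ℤ) ^ ((x :: xs).length - S.card)) • f (updEnv (x :: xs) S s)
        = - F (Function.update s x 0) := by
      rw [hFdef, ← Finset.sum_neg_distrib]
      apply Finset.sum_congr rfl
      intro S hS
      rw [← hupd0 S hS]
      have hexp : (x :: xs).length - S.card = (xs.length - S.card) + 1 := by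
        have := hcard S hS
        simp only [List.length_cons]
        omega
      rw [hexp, pow_succ]
      simp [neg_smul, mul_comm]
    have e1 : ∑ S ∈ xs.toFinset.powerset,
        ((-1 : ℤ) ^ ((x :: xs).length - (insert x S).card))
          • f (updEnv (x :: xs) (insert x S) s)
        = F (Function.update s x 1) := by
      rw [hFdef]
      apply Finset.sum_congr rfl
      intro S hS
      have hxS : x ∉ S := fun h => hxts (Finset.mem_powerset.1 hS h)
      rw [← hupd1 S hS]
      have hexp : (x :: xs).length - (insert x S).card = xs.length - S.card := by
        rw [Finset.card_insert_of_notMem hxS]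
        simp only [List.length_cons]
        omega
      rw [hexp]
    rw [e0, e1]
    abel
end Aux

/-- Decoupling-parameter representation of the polymer fugacity: the alternating sum
`ξ(B) = Σ_{B' ⊆ B} (-1)^{|B \ B'|} e^{-β H_{B'}}` equals the iterated integral over the
unit cube `[0,1]^B` of the full mixed partial derivative of
`G(s) = e^{-β Σ_{X ∈ B} s_X Φ(X)}`. -/
theorem stmt_10 {ι E : Type*} [Fintype ι] [DecidableEq ι] [LinearOrder ι]
    [NormedAddCommGroup E] [InnerProductSpace ℂ E] [FiniteDimensional ℂ E]
    (Φ : ι → E →L[ℂ] E) (β : ℝ) (B : Finset ι) :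
    ∑ B' ∈ B.powerset, ((-1 : ℤ) ^ ((B \ B').card)) •
        exp (-(β • ∑ X ∈ B', Φ X)) =
      intPartial (B.sort (· ≤ ·))
        (fun u => exp (-(β • ∑ X ∈ B, u X • Φ X))) (fun _ => 0) := by
  set l : List ι := B.sort (· ≤ ·) with hl
  have hnd : l.Nodup := B.sort_nodup _
  have htf : l.toFinset = B := B.sort_toFinset _
  have hlen : l.length = B.card := B.length_sort _
  set f : (ι → ℝ) → (E →L[ℂ] E) :=
    fun u => exp (-(β • ∑ X ∈ B, u X • Φ X)) with hfdef
  have hexp : ContDiff ℝ ⊤ (exp : (E →L[ℂ] E) → (E →L[ℂ] E)) := by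
    have h : ContDiff ℂ ⊤ (exp : (E →L[ℂ] E) → (E →L[ℂ] E)) :=
      contDiff_iff_contDiffAt.2 fun y => (exp_analytic (𝕂 := ℂ) y).contDiffAt
    exact h.restrict_scalars ℝ
  have hlin : ContDiff ℝ ⊤ (fun u : ι → ℝ => -(β • ∑ X ∈ B, u X • Φ X)) := by
    apply ContDiff.neg
    apply ContDiff.const_smul
    apply ContDiff.sum
    intro X _
    exact ((ContinuousLinearMap.proj (R := ℝ) (φ := fun _ : ι => ℝ) X).contDiff).smul
      contDiff_const
  have hf : ContDiff ℝ ⊤ f := hexp.comp hlin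
  rw [intPartial_eq f hf l hnd (fun _ => 0), htf, hlen]
  apply Finset.sum_congr rfl
  intro S hS
  have hSB : S ⊆ B := Finset.mem_powerset.1 hS
  have hsign : (B \ S).card = B.card - S.card := Finset.card_sdiff_of_subset hSB
  rw [hsign]
  congr 1
  rw [hfdef]
  congr 3
  rw [← Finset.sum_subset hSB]
  · apply Finset.sum_congr rfl
    intro X hX
    have : updEnv l S (fun _ => 0) X = 1 := by simp [updEnv, hX]
    rw [this, one_smul]
  · intro X hXB hXS
    have hXl : X ∈ l := (Finset.mem_sort _).2 hXB
    have : updEnv l S (fun _ => 0) X = 0 := by simp [updEnv, hXS, hXl]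
    rw [this, zero_smul]
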